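/- Let A ⊆ B be an H-cleft extension via γ with γ(1)=1 (α, β invertible). Define h·a = (γ(α⁻²(h₁))β⁻¹(a))γ⁻¹(α⁻¹(h₂)) and σ(h,g) = (γ(α⁻³(h₁))γ(α⁻³(g₁)))γ⁻¹(α⁻³(h₂g₂)). Then for all h,g ∈ H and a ∈ A, the elements h·a and σ(h,g) lie in A = B^{coH}. -/

import Mathlib

open scoped TensorProduct BigOperators

universe u v

/-- A Hom-Hopf algebra over a field `k`, with a chosen Sweedler-type
decomposition (`Idx`, `T`, `d1`, `d2`) of the comultiplication:
`comul h = ∑ i ∈ T h, d1 h i ⊗ₜ d2 h i`.  The structure map `α` is assumed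
bijective (a linear equivalence), as throughout the paper. -/
structure HomHopf (k : Type u) (H : Type v) [Field k] [AddCommGroup H] [Module k H] where
  mul : H →ₗ[k] H →ₗ[k] H
  one : H
  α : H ≃ₗ[k] H
  comul : H →ₗ[k] H ⊗[k] H
  counit : H →ₗ[k] k
  S : H →ₗ[k] H
  Idx : Type v
  T : H → Finset Idx
  d1 : H → Idx → H
  d2 : H → Idx → H
  repr : ∀ h, comul h = ∑ i ∈ T h, d1 h i ⊗ₜ[k] d2 h i
  α_one : α one = one
  α_mul : ∀ x y, α (mul x y) = mul (α x) (α y)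
  one_mul : ∀ x, mul one x = α x
  mul_one : ∀ x, mul x one = α x
  hom_assoc : ∀ x y z, mul (α x) (mul y z) = mul (mul x y) (α z)
  counit_α : ∀ h, counit (α h) = counit h
  comul_α : ∀ h, comul (α h) = ∑ i ∈ T h, α (d1 h i) ⊗ₜ[k] α (d2 h i)
  counit_left : ∀ h, ∑ i ∈ T h, counit (d1 h i) • d2 h i = α h
  counit_right : ∀ h, ∑ i ∈ T h, counit (d2 h i) • d1 h i = α h
  hom_coassoc : ∀ h,
    (TensorProduct.assoc k H H H) (∑ i ∈ T h, comul (d1 h i) ⊗ₜ[k] α (d2 h i))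
      = ∑ i ∈ T h, α (d1 h i) ⊗ₜ[k] comul (d2 h i)
  counit_one : counit one = 1
  counit_mul : ∀ x y, counit (mul x y) = counit x * counit y
  comul_one : comul one = one ⊗ₜ[k] one
  comul_mul : ∀ x y, comul (mul x y)
      = ∑ i ∈ T x, ∑ j ∈ T y, mul (d1 x i) (d1 y j) ⊗ₜ[k] mul (d2 x i) (d2 y j)
  S_α : ∀ h, S (α h) = α (S h)
  S_left : ∀ h, ∑ i ∈ T h, mul (S (d1 h i)) (d2 h i) = counit h • one
  S_right : ∀ h, ∑ i ∈ T h, mul (d1 h i) (S (d2 h i)) = counit h • one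

/-- A unital Hom-associative algebra with bijective structure map. -/
structure HomAlg (k : Type u) (A : Type v) [Field k] [AddCommGroup A] [Module k A] where
  mul : A →ₗ[k] A →ₗ[k] A
  one : A
  β : A ≃ₗ[k] A
  β_one : β one = one
  β_mul : ∀ x y, β (mul x y) = mul (β x) (β y)
  one_mul : ∀ x, mul one x = β x
  mul_one : ∀ x, mul x one = β x
  hom_assoc : ∀ x y z, mul (β x) (mul y z) = mul (mul x y) (β z)

section Comod

variable (k : Type u) (H B : Type v) [Field k]
  [AddCommGroup H] [Module k H] [AddCommGroup B] [Module k B]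

/-- A right Hom-`H`-comodule algebra `(B,β)` with a chosen Sweedler decomposition
`ρ b = ∑ i ∈ Tc b, r0 b i ⊗ₜ r1 b i` of the coaction. -/
structure RComodAlg (HH : HomHopf k H) where
  mul : B →ₗ[k] B →ₗ[k] B
  one : B
  β : B ≃ₗ[k] B
  β_one : β one = one
  β_mul : ∀ x y, β (mul x y) = mul (β x) (β y)
  one_mul : ∀ x, mul one x = β x
  mul_one : ∀ x, mul x one = β x
  hom_assoc : ∀ x y z, mul (β x) (mul y z) = mul (mul x y) (β z)
  ρ : B →ₗ[k] B ⊗[k] H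
  Jdx : Type v
  Tc : B → Finset Jdx
  r0 : B → Jdx → B
  r1 : B → Jdx → H
  reprρ : ∀ b, ρ b = ∑ i ∈ Tc b, r0 b i ⊗ₜ[k] r1 b i
  counit_ρ : ∀ b, ∑ i ∈ Tc b, HH.counit (r1 b i) • r0 b i = β b
  ρ_β : ∀ b, ρ (β b) = ∑ i ∈ Tc b, β (r0 b i) ⊗ₜ[k] HH.α (r1 b i)
  ρ_coassoc : ∀ b, (TensorProduct.assoc k B H H)
      (∑ i ∈ Tc b, ρ (r0 b i) ⊗ₜ[k] HH.α (r1 b i))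
    = ∑ i ∈ Tc b, β (r0 b i) ⊗ₜ[k] HH.comul (r1 b i)
  ρ_mul : ∀ b b', ρ (mul b b')
    = ∑ i ∈ Tc b, ∑ j ∈ Tc b', mul (r0 b i) (r0 b' j) ⊗ₜ[k] HH.mul (r1 b i) (r1 b' j)
  ρ_one : ρ one = one ⊗ₜ[k] HH.one

variable {k H B}

/-- `γ` is a convolution invertible (with inverse `γ'`) right `H`-comodule map
`H → B` with `γ(1) = 1`, i.e. the data of a cleft extension `B^{coH} ⊆ B`. -/
def CleftData {HH : HomHopf k H} (BB : RComodAlg k H B HH) (γ γ' : H →ₗ[k] B) : Prop :=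
  (∀ h, BB.ρ (γ h) = ∑ i ∈ HH.T h, γ (HH.d1 h i) ⊗ₜ[k] HH.d2 h i) ∧
  (∀ h, γ (HH.α h) = BB.β (γ h)) ∧
  (∀ h, ∑ i ∈ HH.T h, BB.mul (γ (HH.d1 h i)) (γ' (HH.d2 h i)) = HH.counit h • BB.one) ∧
  (∀ h, ∑ i ∈ HH.T h, BB.mul (γ' (HH.d1 h i)) (γ (HH.d2 h i)) = HH.counit h • BB.one) ∧
  (γ HH.one = BB.one)

end Comod


section Infra

variable {k : Type u} {H B : Type v} [Field k]
  [AddCommGroup H] [Module k H] [AddCommGroup B] [Module k B]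
variable {X : Type*} [AddCommGroup X] [Module k X]

open TensorProduct

theorem sum_lift_comul (HH : HomHopf k H) (t : H →ₗ[k] H →ₗ[k] X) (h : H) :
    TensorProduct.lift t (HH.comul h) = ∑ i ∈ HH.T h, t (HH.d1 h i) (HH.d2 h i) := by
  rw [HH.repr]; simp

theorem comul_alpha (HH : HomHopf k H) (h : H) :
    HH.comul (HH.α h)
      = TensorProduct.map (HH.α : H →ₗ[k] H) (HH.α : H →ₗ[k] H) (HH.comul h) := by
  rw [HH.comul_α, HH.repr]
  simp [map_sum]

theorem comul_alpha_symm (HH : HomHopf k H) (h : H) :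
    HH.comul (HH.α.symm h)
      = TensorProduct.map (HH.α.symm : H →ₗ[k] H) (HH.α.symm : H →ₗ[k] H) (HH.comul h) := by
  have h1 : HH.comul h
      = TensorProduct.map (HH.α : H →ₗ[k] H) (HH.α : H →ₗ[k] H) (HH.comul (HH.α.symm h)) := by
    have := comul_alpha HH (HH.α.symm h)
    simpa using this
  rw [h1, HH.repr (HH.α.symm h)]
  simp [map_sum]

noncomputable def lift3r (t : H →ₗ[k] H →ₗ[k] H →ₗ[k] X) :
    H ⊗[k] (H ⊗[k] H) →ₗ[k] X :=
  TensorProduct.lift ((TensorProduct.uncurry (RingHom.id k) H H X).comp t)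

@[simp] theorem lift3r_tmul (t : H →ₗ[k] H →ₗ[k] H →ₗ[k] X) (x y z : H) :
    lift3r t (x ⊗ₜ[k] (y ⊗ₜ[k] z)) = t x y z := by
  simp [lift3r]

theorem coassoc_sum (HH : HomHopf k H) (t : H →ₗ[k] H →ₗ[k] H →ₗ[k] X) (h : H) :
    ∑ i ∈ HH.T h, ∑ j ∈ HH.T (HH.d1 h i),
        t (HH.d1 (HH.d1 h i) j) (HH.d2 (HH.d1 h i) j) (HH.α (HH.d2 h i))
    = ∑ i ∈ HH.T h, ∑ j ∈ HH.T (HH.d2 h i),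
        t (HH.α (HH.d1 h i)) (HH.d1 (HH.d2 h i) j) (HH.d2 (HH.d2 h i) j) := by
  have hc := congrArg (lift3r t) (HH.hom_coassoc h)
  simp only [HH.repr, TensorProduct.sum_tmul, TensorProduct.tmul_sum, map_sum,
    TensorProduct.assoc_tmul, lift3r_tmul] at hc
  exact hc

theorem comul_mul_sum (HH : HomHopf k H) (t : H →ₗ[k] H →ₗ[k] X) (x y : H) :
    ∑ i ∈ HH.T (HH.mul x y), t (HH.d1 (HH.mul x y) i) (HH.d2 (HH.mul x y) i)
    = ∑ i ∈ HH.T x, ∑ j ∈ HH.T y,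
        t (HH.mul (HH.d1 x i) (HH.d1 y j)) (HH.mul (HH.d2 x i) (HH.d2 y j)) := by
  have h1 := congrArg (TensorProduct.lift t) (HH.comul_mul x y)
  rw [HH.repr] at h1
  simpa [map_sum] using h1

theorem comul_ainv_sum (HH : HomHopf k H) (t : H →ₗ[k] H →ₗ[k] X) (h : H) :
    ∑ i ∈ HH.T (HH.α.symm h), t (HH.d1 (HH.α.symm h) i) (HH.d2 (HH.α.symm h) i)
    = ∑ i ∈ HH.T h, t (HH.α.symm (HH.d1 h i)) (HH.α.symm (HH.d2 h i)) := by
  have h1 := congrArg (TensorProduct.lift t) (comul_alpha_symm HH h)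
  rw [HH.repr (HH.α.symm h), HH.repr h] at h1
  simpa [map_sum] using h1

theorem counit_S (HH : HomHopf k H) (x : H) : HH.counit (HH.S x) = HH.counit x := by
  have h1 := congrArg HH.counit (HH.S_left x)
  simp only [map_sum, HH.counit_mul, map_smul, HH.counit_one, smul_eq_mul, mul_one] at h1
  have h2 : HH.counit (HH.S (HH.α x)) = HH.counit x := by
    rw [← HH.counit_right x, map_sum, map_sum]
    rw [← h1]
    refine Finset.sum_congr rfl fun i _ => ?_
    simp [mul_comm]
  calc HH.counit (HH.S x) = HH.counit (HH.α (HH.S x)) := (HH.counit_α _).symm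
    _ = HH.counit (HH.S (HH.α x)) := by rw [HH.S_α]
    _ = HH.counit x := h2

end Infra


section Infra2

variable {k : Type u} {H B : Type v} [Field k]
  [AddCommGroup H] [Module k H] [AddCommGroup B] [Module k B]
variable {X : Type*} [AddCommGroup X] [Module k X]

open TensorProduct

/-- multiplication on `B ⊗ H`. -/
noncomputable def mulBH (HH : HomHopf k H) (BB : RComodAlg k H B HH) :
    (B ⊗[k] H) →ₗ[k] (B ⊗[k] H) →ₗ[k] (B ⊗[k] H) :=
  TensorProduct.lift (LinearMap.mk₂ k
    (fun b h => TensorProduct.map (BB.mul b) (HH.mul h))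
    (by intro b b' h; rw [map_add, TensorProduct.map_add_left])
    (by intro c b h; rw [map_smul, TensorProduct.map_smul_left])
    (by intro b h h'; rw [map_add, TensorProduct.map_add_right])
    (by intro c b h; rw [map_smul, TensorProduct.map_smul_right]))

@[simp] theorem mulBH_tmul (HH : HomHopf k H) (BB : RComodAlg k H B HH)
    (b b' : B) (h h' : H) :
    mulBH HH BB (b ⊗ₜ[k] h) (b' ⊗ₜ[k] h') = BB.mul b b' ⊗ₜ[k] HH.mul h h' := by
  simp [mulBH]

theorem rho_mul' (HH : HomHopf k H) (BB : RComodAlg k H B HH) (b b' : B) :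
    BB.ρ (BB.mul b b') = mulBH HH BB (BB.ρ b) (BB.ρ b') := by
  rw [BB.ρ_mul, BB.reprρ b, BB.reprρ b']
  simp only [map_sum, LinearMap.sum_apply, mulBH_tmul]
  rw [Finset.sum_comm]

theorem map_equiv_inj (e1 : B ≃ₗ[k] B) (e2 : H ≃ₗ[k] H) :
    Function.Injective (TensorProduct.map (e1 : B →ₗ[k] B) (e2 : H →ₗ[k] H)) := by
  intro x y hxy
  have h := congrArg (TensorProduct.map (e1.symm : B →ₗ[k] B) (e2.symm : H →ₗ[k] H)) hxy
  have hid : ∀ z : B ⊗[k] H,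
      TensorProduct.map (e1.symm : B →ₗ[k] B) (e2.symm : H →ₗ[k] H)
        (TensorProduct.map (e1 : B →ₗ[k] B) (e2 : H →ₗ[k] H) z) = z := by
    intro z
    induction z using TensorProduct.induction_on with
    | zero => simp
    | tmul a b => simp
    | add u v hu hv => rw [map_add, map_add, hu, hv]
  rwa [hid, hid] at h

theorem rho_beta (HH : HomHopf k H) (BB : RComodAlg k H B HH) (b : B) :
    BB.ρ (BB.β b)
      = TensorProduct.map (BB.β : B →ₗ[k] B) (HH.α : H →ₗ[k] H) (BB.ρ b) := by
  rw [BB.ρ_β, BB.reprρ b]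
  simp [map_sum]

theorem rho_beta_symm (HH : HomHopf k H) (BB : RComodAlg k H B HH) (a : B)
    (ha : BB.ρ a = BB.β a ⊗ₜ[k] HH.one) :
    BB.ρ (BB.β.symm a) = a ⊗ₜ[k] HH.one := by
  have h1 := rho_beta HH BB (BB.β.symm a)
  rw [BB.β.apply_symm_apply, ha] at h1
  apply map_equiv_inj BB.β HH.α
  rw [← h1]
  simp [HH.α_one]

/-- `(id ⊗ ε)` contraction `B ⊗ H → B`. -/
noncomputable def epsB (HH : HomHopf k H) : B ⊗[k] H →ₗ[k] B :=
  TensorProduct.lift (LinearMap.mk₂ k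
    (fun b h => HH.counit h • b)
    (by intro b b' h; rw [smul_add])
    (by intro c b h; rw [smul_comm])
    (by intro b h h'; rw [map_add, add_smul])
    (by intro c b h; rw [map_smul, smul_eq_mul, mul_smul]))

@[simp] theorem epsB_tmul (HH : HomHopf k H) (b : B) (h : H) :
    epsB HH (b ⊗ₜ[k] h) = HH.counit h • b := by
  simp [epsB]

theorem epsB_rho (HH : HomHopf k H) (BB : RComodAlg k H B HH) (b : B) :
    epsB HH (BB.ρ b) = BB.β b := by
  rw [BB.reprρ b, map_sum]
  simpa using BB.counit_ρ b

theorem beta_gamma' (HH : HomHopf k H) (BB : RComodAlg k H B HH) (γ' : H →ₗ[k] B)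
    (hγ'ρ : ∀ h, BB.ρ (γ' h) = ∑ i ∈ HH.T h, γ' (HH.d2 h i) ⊗ₜ[k] HH.S (HH.d1 h i))
    (h : H) : BB.β (γ' h) = γ' (HH.α h) := by
  have h1 := epsB_rho HH BB (γ' h)
  rw [hγ'ρ h, map_sum] at h1
  simp only [epsB_tmul, counit_S] at h1
  rw [← h1, ← HH.counit_left h, map_sum]
  exact Finset.sum_congr rfl fun i _ => by rw [map_smul]

theorem rearrange (HH : HomHopf k H) (Φ : H →ₗ[k] H →ₗ[k] H →ₗ[k] H →ₗ[k] X) (h : H) :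
    ∑ i ∈ HH.T h, ∑ p ∈ HH.T (HH.d1 h i), ∑ r ∈ HH.T (HH.d2 h i),
        Φ (HH.d1 (HH.d1 h i) p) (HH.d2 (HH.d1 h i) p)
          (HH.d1 (HH.d2 h i) r) (HH.d2 (HH.d2 h i) r)
    = ∑ i ∈ HH.T h, ∑ kk ∈ HH.T (HH.d2 h i), ∑ j ∈ HH.T (HH.d1 (HH.d2 h i) kk),
        Φ (HH.α (HH.d1 h i)) (HH.α.symm (HH.d1 (HH.d1 (HH.d2 h i) kk) j))
          (HH.α.symm (HH.d2 (HH.d1 (HH.d2 h i) kk) j)) (HH.d2 (HH.d2 h i) kk) := by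
  classical
  -- the trilinear map used in the first coassociativity step
  set t : H →ₗ[k] H →ₗ[k] H →ₗ[k] X := LinearMap.mk₂ k
    (fun x₁ x₂ => ((TensorProduct.uncurry (RingHom.id k) H H X) (Φ x₁ x₂)).comp
      (HH.comul.comp (HH.α.symm : H →ₗ[k] H)))
    (by intro x x' y; simp only [map_add, LinearMap.add_apply, LinearMap.add_comp])
    (by intro c x y; simp only [map_smul, LinearMap.smul_apply, LinearMap.smul_comp])
    (by intro x y y'; simp only [map_add, LinearMap.add_apply, LinearMap.add_comp])
    (by intro c x y; simp only [map_smul, LinearMap.smul_apply, LinearMap.smul_comp])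
    with ht
  have happ : ∀ x₁ x₂ z, t x₁ x₂ z
      = ∑ r ∈ HH.T (HH.α.symm z),
          Φ x₁ x₂ (HH.d1 (HH.α.symm z) r) (HH.d2 (HH.α.symm z) r) := by
    intro x₁ x₂ z
    simp only [ht, LinearMap.mk₂_apply, LinearMap.comp_apply, LinearEquiv.coe_coe]
    rw [HH.repr (HH.α.symm z), map_sum]
    simp
  have step1 : (∑ i ∈ HH.T h, ∑ p ∈ HH.T (HH.d1 h i), ∑ r ∈ HH.T (HH.d2 h i),
        Φ (HH.d1 (HH.d1 h i) p) (HH.d2 (HH.d1 h i) p)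
          (HH.d1 (HH.d2 h i) r) (HH.d2 (HH.d2 h i) r))
      = ∑ i ∈ HH.T h, ∑ p ∈ HH.T (HH.d1 h i),
          t (HH.d1 (HH.d1 h i) p) (HH.d2 (HH.d1 h i) p) (HH.α (HH.d2 h i)) := by
    refine Finset.sum_congr rfl fun i _ => Finset.sum_congr rfl fun p _ => ?_
    rw [happ]
    simp
  rw [step1, coassoc_sum HH t h]
  refine Finset.sum_congr rfl fun i _ => ?_
  -- now at fixed i, rewrite t and apply coassociativity again for w = d2 h i
  have step2 : ∀ kk ∈ HH.T (HH.d2 h i),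
      t (HH.α (HH.d1 h i)) (HH.d1 (HH.d2 h i) kk) (HH.d2 (HH.d2 h i) kk)
      = ∑ m ∈ HH.T (HH.d2 (HH.d2 h i) kk),
          Φ (HH.α (HH.d1 h i)) (HH.d1 (HH.d2 h i) kk)
            (HH.α.symm (HH.d1 (HH.d2 (HH.d2 h i) kk) m))
            (HH.α.symm (HH.d2 (HH.d2 (HH.d2 h i) kk) m)) := by
    intro kk _
    rw [happ]
    exact comul_ainv_sum HH (Φ (HH.α (HH.d1 h i)) (HH.d1 (HH.d2 h i) kk))
      (HH.d2 (HH.d2 h i) kk)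
  rw [Finset.sum_congr rfl step2]
  -- second coassociativity application with trilinear map t₃
  set t₃ : H →ₗ[k] H →ₗ[k] H →ₗ[k] X := LinearMap.mk₂ k
    (fun p q => ((Φ (HH.α (HH.d1 h i)) (HH.α.symm p)) (HH.α.symm q)).comp
      (HH.α.symm : H →ₗ[k] H))
    (by intro x x' y; simp only [map_add, LinearMap.add_apply, LinearMap.add_comp])
    (by intro c x y; simp only [map_smul, LinearMap.smul_apply, LinearMap.smul_comp])
    (by intro x y y'; simp only [map_add, LinearMap.add_apply, LinearMap.add_comp])
    (by intro c x y; simp only [map_smul, LinearMap.smul_apply, LinearMap.smul_comp])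
    with ht₃
  have h3 := coassoc_sum HH t₃ (HH.d2 h i)
  simp only [ht₃, LinearMap.mk₂_apply, LinearMap.comp_apply, LinearEquiv.coe_coe,
    LinearEquiv.symm_apply_apply] at h3
  rw [← h3]

end Infra2


section Infra3

variable {k : Type u} {H B : Type v} [Field k]
  [AddCommGroup H] [Module k H] [AddCommGroup B] [Module k B]
variable {X : Type*} [AddCommGroup X] [Module k X]

open TensorProduct

theorem alpha_symm_mul (HH : HomHopf k H) (x y : H) :
    HH.α.symm (HH.mul x y) = HH.mul (HH.α.symm x) (HH.α.symm y) := by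
  apply HH.α.injective; simp [HH.α_mul]

theorem S_alpha_symm (HH : HomHopf k H) (x : H) :
    HH.S (HH.α.symm x) = HH.α.symm (HH.S x) := by
  apply HH.α.injective; rw [← HH.S_α]; simp

theorem alpha_symm_one (HH : HomHopf k H) : HH.α.symm HH.one = HH.one := by
  apply HH.α.injective; simp [HH.α_one]

theorem comul_ainv2_sum (HH : HomHopf k H) (t : H →ₗ[k] H →ₗ[k] X) (x : H) :
    ∑ i ∈ HH.T (HH.α.symm (HH.α.symm x)),
        t (HH.d1 (HH.α.symm (HH.α.symm x)) i) (HH.d2 (HH.α.symm (HH.α.symm x)) i)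
    = ∑ i ∈ HH.T x,
        t (HH.α.symm (HH.α.symm (HH.d1 x i))) (HH.α.symm (HH.α.symm (HH.d2 x i))) := by
  rw [comul_ainv_sum HH t (HH.α.symm x)]
  have h2 := comul_ainv_sum HH
    (t.compl₁₂ (HH.α.symm : H →ₗ[k] H) (HH.α.symm : H →ₗ[k] H)) x
  simpa only [LinearMap.compl₁₂_apply, LinearEquiv.coe_coe] using h2

theorem comul_ainv3_sum (HH : HomHopf k H) (t : H →ₗ[k] H →ₗ[k] X) (x : H) :
    ∑ i ∈ HH.T (HH.α.symm (HH.α.symm (HH.α.symm x))),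
        t (HH.d1 (HH.α.symm (HH.α.symm (HH.α.symm x))) i)
          (HH.d2 (HH.α.symm (HH.α.symm (HH.α.symm x))) i)
    = ∑ i ∈ HH.T x,
        t (HH.α.symm (HH.α.symm (HH.α.symm (HH.d1 x i))))
          (HH.α.symm (HH.α.symm (HH.α.symm (HH.d2 x i)))) := by
  rw [comul_ainv2_sum HH t (HH.α.symm x)]
  have h2 := comul_ainv_sum HH
    ((t.compl₁₂ (HH.α.symm : H →ₗ[k] H) (HH.α.symm : H →ₗ[k] H)).compl₁₂
      (HH.α.symm : H →ₗ[k] H) (HH.α.symm : H →ₗ[k] H)) x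
  simpa only [LinearMap.compl₁₂_apply, LinearEquiv.coe_coe] using h2

/-- 4-linear map `(x₁,x₂,y₁,y₂) ↦ f x₁ y₂ ⊗ g x₂ y₁`. -/
noncomputable def phi4 (f : H →ₗ[k] H →ₗ[k] B) (g : H →ₗ[k] H →ₗ[k] H) :
    H →ₗ[k] H →ₗ[k] H →ₗ[k] H →ₗ[k] B ⊗[k] H :=
  LinearMap.mk₂ k (fun x₁ x₂ => LinearMap.mk₂ k (fun y₁ y₂ => f x₁ y₂ ⊗ₜ[k] g x₂ y₁)
      (fun m m' n => by rw [map_add, TensorProduct.tmul_add])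
      (fun c m n => by rw [map_smul, TensorProduct.tmul_smul])
      (fun m n n' => by rw [map_add, TensorProduct.add_tmul])
      (fun c m n => by rw [map_smul, TensorProduct.smul_tmul']))
    (by intro x x' z; ext y₁ y₂
        simp [map_add, LinearMap.add_apply, TensorProduct.add_tmul])
    (by intro c x z; ext y₁ y₂
        simp [map_smul, LinearMap.smul_apply, TensorProduct.smul_tmul'])
    (by intro x z z'; ext y₁ y₂
        simp [map_add, LinearMap.add_apply, TensorProduct.tmul_add])
    (by intro c x z; ext y₁ y₂
        simp [map_smul, LinearMap.smul_apply, TensorProduct.tmul_smul])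

@[simp] theorem phi4_apply (f : H →ₗ[k] H →ₗ[k] B) (g : H →ₗ[k] H →ₗ[k] H)
    (x₁ x₂ y₁ y₂ : H) : phi4 f g x₁ x₂ y₁ y₂ = f x₁ y₂ ⊗ₜ[k] g x₂ y₁ := rfl

end Infra3

section S6

variable {k : Type u} {H B : Type v} [Field k]
  [AddCommGroup H] [Module k H] [AddCommGroup B] [Module k B]

/-- The crossed-product action `h·a = (γ(α⁻²(h₁))β⁻¹(a))γ⁻¹(α⁻¹(h₂))` induced by a
cleft extension. -/
def cleftAct (HH : HomHopf k H) (BB : RComodAlg k H B HH) (γ γ' : H →ₗ[k] B)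
    (h : H) (a : B) : B :=
  ∑ i ∈ HH.T h,
    BB.mul (BB.mul (γ (HH.α.symm (HH.α.symm (HH.d1 h i)))) (BB.β.symm a))
      (γ' (HH.α.symm (HH.d2 h i)))

/-- The crossed-product cocycle `σ(h,g) = (γ(α⁻³(h₁))γ(α⁻³(g₁)))γ⁻¹(α⁻³(h₂g₂))`
induced by a cleft extension. -/
def cleftSigma (HH : HomHopf k H) (BB : RComodAlg k H B HH) (γ γ' : H →ₗ[k] B)
    (h g : H) : B :=
  ∑ i ∈ HH.T h, ∑ j ∈ HH.T g,
    BB.mul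
      (BB.mul (γ (HH.α.symm (HH.α.symm (HH.α.symm (HH.d1 h i)))))
        (γ (HH.α.symm (HH.α.symm (HH.α.symm (HH.d1 g j))))))
      (γ' (HH.α.symm (HH.α.symm (HH.α.symm (HH.mul (HH.d2 h i) (HH.d2 g j))))))

set_option maxHeartbeats 2000000 in
/-- For a cleft extension `A = B^{coH} ⊆ B` via `γ`, the induced
action `h·a` and cocycle `σ(h,g)` take values in the coinvariants `A = B^{coH}`. -/
theorem cleft_act_sigma_coinvariant
    (HH : HomHopf k H) (BB : RComodAlg k H B HH) (γ γ' : H →ₗ[k] B)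
    (hγ : CleftData BB γ γ')
    (hγ'ρ : ∀ h, BB.ρ (γ' h) = ∑ i ∈ HH.T h, γ' (HH.d2 h i) ⊗ₜ[k] HH.S (HH.d1 h i)) :
    (∀ h : H, ∀ a : B, BB.ρ a = BB.β a ⊗ₜ[k] HH.one →
      BB.ρ (cleftAct HH BB γ γ' h a) = BB.β (cleftAct HH BB γ γ' h a) ⊗ₜ[k] HH.one) ∧
    (∀ h g : H,
      BB.ρ (cleftSigma HH BB γ γ' h g) = BB.β (cleftSigma HH BB γ γ' h g) ⊗ₜ[k] HH.one) := by
  classical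
  obtain ⟨hρg, hβγ, hgg', hg'g, hγ1⟩ := hγ
  have hβγ' : ∀ x, BB.β (γ' x) = γ' (HH.α x) := beta_gamma' HH BB γ' hγ'ρ
  constructor
  · intro h a ha
    set A2 : H →ₗ[k] H := (HH.α.symm : H →ₗ[k] H).comp (HH.α.symm : H →ₗ[k] H) with hA2
    set f : H →ₗ[k] H →ₗ[k] B :=
      (BB.mul.comp ((BB.mul.flip a).comp (γ.comp A2))).compl₂
        (γ'.comp (HH.α.symm : H →ₗ[k] H)) with hf
    set g : H →ₗ[k] H →ₗ[k] H :=
      (HH.mul.comp ((HH.mul.flip HH.one).comp A2)).compl₂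
        (HH.S.comp (HH.α.symm : H →ₗ[k] H)) with hg
    have hfapp : ∀ x y, f x y
        = BB.mul (BB.mul (γ (HH.α.symm (HH.α.symm x))) a) (γ' (HH.α.symm y)) := by
      intro x y; simp [hf, hA2]
    have hgapp : ∀ x y, g x y
        = HH.mul (HH.mul (HH.α.symm (HH.α.symm x)) HH.one) (HH.S (HH.α.symm y)) := by
      intro x y; simp [hg, hA2]
    have key : ∀ x : H, BB.ρ (γ (HH.α.symm (HH.α.symm x)))
        = ∑ p ∈ HH.T x, γ (HH.α.symm (HH.α.symm (HH.d1 x p))) ⊗ₜ[k]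
            HH.α.symm (HH.α.symm (HH.d2 x p)) := by
      intro x
      rw [hρg]
      have := comul_ainv2_sum HH ((TensorProduct.mk k B H).comp γ) x
      simpa using this
    have key' : ∀ x : H, BB.ρ (γ' (HH.α.symm x))
        = ∑ r ∈ HH.T x, γ' (HH.α.symm (HH.d2 x r)) ⊗ₜ[k] HH.S (HH.α.symm (HH.d1 x r)) := by
      intro x
      rw [hγ'ρ]
      have := comul_ainv_sum HH ((((TensorProduct.mk k B H).comp γ').compl₂ HH.S).flip) x
      simpa using this
    calc BB.ρ (cleftAct HH BB γ γ' h a)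
        = ∑ i ∈ HH.T h, ∑ p ∈ HH.T (HH.d1 h i), ∑ r ∈ HH.T (HH.d2 h i),
            phi4 f g (HH.d1 (HH.d1 h i) p) (HH.d2 (HH.d1 h i) p)
              (HH.d1 (HH.d2 h i) r) (HH.d2 (HH.d2 h i) r) := by
          simp only [cleftAct, map_sum]
          refine Finset.sum_congr rfl fun i _ => ?_
          rw [rho_mul' HH BB, rho_mul' HH BB, rho_beta_symm HH BB a ha,
            key (HH.d1 h i), key' (HH.d2 h i)]
          simp only [map_sum, LinearMap.sum_apply, mulBH_tmul, phi4_apply, hfapp, hgapp]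
          rw [Finset.sum_comm]
      _ = ∑ i ∈ HH.T h, ∑ kk ∈ HH.T (HH.d2 h i), ∑ j ∈ HH.T (HH.d1 (HH.d2 h i) kk),
            phi4 f g (HH.α (HH.d1 h i)) (HH.α.symm (HH.d1 (HH.d1 (HH.d2 h i) kk) j))
              (HH.α.symm (HH.d2 (HH.d1 (HH.d2 h i) kk) j)) (HH.d2 (HH.d2 h i) kk) :=
          rearrange HH (phi4 f g) h
      _ = ∑ i ∈ HH.T h, ∑ kk ∈ HH.T (HH.d2 h i),
            HH.counit (HH.d1 (HH.d2 h i) kk) •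
              (f (HH.α (HH.d1 h i)) (HH.d2 (HH.d2 h i) kk) ⊗ₜ[k] HH.one) := by
          refine Finset.sum_congr rfl fun i _ => Finset.sum_congr rfl fun kk _ => ?_
          simp only [phi4_apply]
          rw [← TensorProduct.tmul_sum]
          have hsum : (∑ j ∈ HH.T (HH.d1 (HH.d2 h i) kk),
              g (HH.α.symm (HH.d1 (HH.d1 (HH.d2 h i) kk) j))
                (HH.α.symm (HH.d2 (HH.d1 (HH.d2 h i) kk) j)))
              = HH.counit (HH.d1 (HH.d2 h i) kk) • HH.one := by
            have e1 : ∀ j ∈ HH.T (HH.d1 (HH.d2 h i) kk),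
                g (HH.α.symm (HH.d1 (HH.d1 (HH.d2 h i) kk) j))
                  (HH.α.symm (HH.d2 (HH.d1 (HH.d2 h i) kk) j))
                = HH.α.symm (HH.α.symm (HH.mul (HH.d1 (HH.d1 (HH.d2 h i) kk) j)
                    (HH.S (HH.d2 (HH.d1 (HH.d2 h i) kk) j)))) := by
              intro j _
              rw [hgapp, HH.mul_one]
              simp only [LinearEquiv.apply_symm_apply]
              rw [S_alpha_symm, S_alpha_symm, alpha_symm_mul, alpha_symm_mul]
            rw [Finset.sum_congr rfl e1, ← map_sum, ← map_sum, HH.S_right,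
              map_smul, map_smul, alpha_symm_one, alpha_symm_one]
          rw [hsum, TensorProduct.tmul_smul]
      _ = ∑ i ∈ HH.T h, f (HH.α (HH.d1 h i)) (HH.α (HH.d2 h i)) ⊗ₜ[k] HH.one := by
          refine Finset.sum_congr rfl fun i _ => ?_
          set G : H →ₗ[k] B ⊗[k] H :=
            ((TensorProduct.mk k B H).flip HH.one).comp (f (HH.α (HH.d1 h i))) with hG
          have hGapp : ∀ z, G z = f (HH.α (HH.d1 h i)) z ⊗ₜ[k] HH.one := by
            intro z; simp [hG]
          have hc := congrArg G (HH.counit_left (HH.d2 h i))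
          rw [map_sum] at hc
          simp only [map_smul, hGapp] at hc
          exact hc
      _ = BB.β (cleftAct HH BB γ γ' h a) ⊗ₜ[k] HH.one := by
          simp only [cleftAct, map_sum, TensorProduct.sum_tmul]
          refine Finset.sum_congr rfl fun i _ => ?_
          congr 1
          rw [hfapp, BB.β_mul, BB.β_mul, ← hβγ, hβγ']
          simp
  · intro hh gg
    set A3 : H →ₗ[k] H := (HH.α.symm : H →ₗ[k] H).comp ((HH.α.symm : H →ₗ[k] H).comp (HH.α.symm : H →ₗ[k] H)) with hA3
    have key3 : ∀ x : H, BB.ρ (γ (HH.α.symm (HH.α.symm (HH.α.symm (x)))))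
        = ∑ p ∈ HH.T x, γ (HH.α.symm (HH.α.symm (HH.α.symm (HH.d1 x p)))) ⊗ₜ[k] (HH.α.symm (HH.α.symm (HH.α.symm (HH.d2 x p)))) := by
      intro x
      rw [hρg]
      have := comul_ainv3_sum HH ((TensorProduct.mk k B H).comp γ) x
      simpa using this
    have key3' : ∀ x y : H, BB.ρ (γ' (HH.α.symm (HH.α.symm (HH.α.symm (HH.mul x y)))))
        = ∑ r ∈ HH.T x, ∑ s ∈ HH.T y,
            γ' (HH.α.symm (HH.α.symm (HH.α.symm (HH.mul (HH.d2 x r) (HH.d2 y s))))) ⊗ₜ[k]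
              HH.S (HH.α.symm (HH.α.symm (HH.α.symm (HH.mul (HH.d1 x r) (HH.d1 y s))))) := by
      intro x y
      rw [hγ'ρ]
      have e1 := comul_ainv3_sum HH
        ((((TensorProduct.mk k B H).comp γ').compl₂ HH.S).flip) (HH.mul x y)
      simp only [LinearMap.flip_apply, LinearMap.compl₂_apply, LinearMap.comp_apply,
        TensorProduct.mk_apply] at e1
      rw [e1]
      have e2 := comul_mul_sum HH
        (((((TensorProduct.mk k B H).comp (γ'.comp A3)).compl₂ (HH.S.comp A3))).flip) x y
      simp only [LinearMap.flip_apply, LinearMap.compl₂_apply, LinearMap.comp_apply,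
        TensorProduct.mk_apply, hA3, LinearEquiv.coe_coe] at e2
      exact e2
    calc BB.ρ (cleftSigma HH BB γ γ' hh gg)
        = ∑ i ∈ HH.T hh, ∑ j ∈ HH.T gg, ∑ r ∈ HH.T (HH.d2 hh i), ∑ s ∈ HH.T (HH.d2 gg j), ∑ q ∈ HH.T (HH.d1 gg j), ∑ p ∈ HH.T (HH.d1 hh i), (BB.mul (BB.mul (γ (HH.α.symm (HH.α.symm (HH.α.symm (HH.d1 (HH.d1 hh i) p))))) (γ (HH.α.symm (HH.α.symm (HH.α.symm (HH.d1 (HH.d1 gg j) q)))))) (γ' (HH.α.symm (HH.α.symm (HH.α.symm (HH.mul (HH.d2 (HH.d2 hh i) r) (HH.d2 (HH.d2 gg j) s))))))) ⊗ₜ[k]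
            (HH.mul (HH.mul (HH.α.symm (HH.α.symm (HH.α.symm (HH.d2 (HH.d1 hh i) p)))) (HH.α.symm (HH.α.symm (HH.α.symm (HH.d2 (HH.d1 gg j) q))))) (HH.S (HH.α.symm (HH.α.symm (HH.α.symm (HH.mul (HH.d1 (HH.d2 hh i) r) (HH.d1 (HH.d2 gg j) s))))))) := by
          simp only [cleftSigma, map_sum]
          refine Finset.sum_congr rfl fun i _ => Finset.sum_congr rfl fun j _ => ?_
          rw [rho_mul' HH BB, rho_mul' HH BB, key3 (HH.d1 hh i), key3 (HH.d1 gg j),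
            key3' (HH.d2 hh i) (HH.d2 gg j)]
          simp only [map_sum, LinearMap.sum_apply, mulBH_tmul]
      _ = ∑ j ∈ HH.T gg, ∑ i ∈ HH.T hh, ∑ r ∈ HH.T (HH.d2 hh i), ∑ s ∈ HH.T (HH.d2 gg j), ∑ q ∈ HH.T (HH.d1 gg j), ∑ p ∈ HH.T (HH.d1 hh i), (BB.mul (BB.mul (γ (HH.α.symm (HH.α.symm (HH.α.symm (HH.d1 (HH.d1 hh i) p))))) (γ (HH.α.symm (HH.α.symm (HH.α.symm (HH.d1 (HH.d1 gg j) q)))))) (γ' (HH.α.symm (HH.α.symm (HH.α.symm (HH.mul (HH.d2 (HH.d2 hh i) r) (HH.d2 (HH.d2 gg j) s))))))) ⊗ₜ[k]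
            (HH.mul (HH.mul (HH.α.symm (HH.α.symm (HH.α.symm (HH.d2 (HH.d1 hh i) p)))) (HH.α.symm (HH.α.symm (HH.α.symm (HH.d2 (HH.d1 gg j) q))))) (HH.S (HH.α.symm (HH.α.symm (HH.α.symm (HH.mul (HH.d1 (HH.d2 hh i) r) (HH.d1 (HH.d2 gg j) s))))))) := Finset.sum_comm
      _ = ∑ j ∈ HH.T gg, ∑ i ∈ HH.T hh, ∑ r ∈ HH.T (HH.d2 hh i), ∑ q ∈ HH.T (HH.d1 gg j), ∑ s ∈ HH.T (HH.d2 gg j), ∑ p ∈ HH.T (HH.d1 hh i), (BB.mul (BB.mul (γ (HH.α.symm (HH.α.symm (HH.α.symm (HH.d1 (HH.d1 hh i) p))))) (γ (HH.α.symm (HH.α.symm (HH.α.symm (HH.d1 (HH.d1 gg j) q)))))) (γ' (HH.α.symm (HH.α.symm (HH.α.symm (HH.mul (HH.d2 (HH.d2 hh i) r) (HH.d2 (HH.d2 gg j) s))))))) ⊗ₜ[k]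
            (HH.mul (HH.mul (HH.α.symm (HH.α.symm (HH.α.symm (HH.d2 (HH.d1 hh i) p)))) (HH.α.symm (HH.α.symm (HH.α.symm (HH.d2 (HH.d1 gg j) q))))) (HH.S (HH.α.symm (HH.α.symm (HH.α.symm (HH.mul (HH.d1 (HH.d2 hh i) r) (HH.d1 (HH.d2 gg j) s))))))) :=
          Finset.sum_congr rfl fun j _ => Finset.sum_congr rfl fun i _ =>
            Finset.sum_congr rfl fun r _ => Finset.sum_comm
      _ = ∑ j ∈ HH.T gg, ∑ i ∈ HH.T hh, ∑ q ∈ HH.T (HH.d1 gg j), ∑ r ∈ HH.T (HH.d2 hh i), ∑ s ∈ HH.T (HH.d2 gg j), ∑ p ∈ HH.T (HH.d1 hh i), (BB.mul (BB.mul (γ (HH.α.symm (HH.α.symm (HH.α.symm (HH.d1 (HH.d1 hh i) p))))) (γ (HH.α.symm (HH.α.symm (HH.α.symm (HH.d1 (HH.d1 gg j) q)))))) (γ' (HH.α.symm (HH.α.symm (HH.α.symm (HH.mul (HH.d2 (HH.d2 hh i) r) (HH.d2 (HH.d2 gg j) s))))))) ⊗ₜ[k]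
            (HH.mul (HH.mul (HH.α.symm (HH.α.symm (HH.α.symm (HH.d2 (HH.d1 hh i) p)))) (HH.α.symm (HH.α.symm (HH.α.symm (HH.d2 (HH.d1 gg j) q))))) (HH.S (HH.α.symm (HH.α.symm (HH.α.symm (HH.mul (HH.d1 (HH.d2 hh i) r) (HH.d1 (HH.d2 gg j) s))))))) :=
          Finset.sum_congr rfl fun j _ => Finset.sum_congr rfl fun i _ => Finset.sum_comm
      _ = ∑ j ∈ HH.T gg, ∑ i ∈ HH.T hh, ∑ q ∈ HH.T (HH.d1 gg j), ∑ r ∈ HH.T (HH.d2 hh i), ∑ p ∈ HH.T (HH.d1 hh i), ∑ s ∈ HH.T (HH.d2 gg j), (BB.mul (BB.mul (γ (HH.α.symm (HH.α.symm (HH.α.symm (HH.d1 (HH.d1 hh i) p))))) (γ (HH.α.symm (HH.α.symm (HH.α.symm (HH.d1 (HH.d1 gg j) q)))))) (γ' (HH.α.symm (HH.α.symm (HH.α.symm (HH.mul (HH.d2 (HH.d2 hh i) r) (HH.d2 (HH.d2 gg j) s))))))) ⊗ₜ[k]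
            (HH.mul (HH.mul (HH.α.symm (HH.α.symm (HH.α.symm (HH.d2 (HH.d1 hh i) p)))) (HH.α.symm (HH.α.symm (HH.α.symm (HH.d2 (HH.d1 gg j) q))))) (HH.S (HH.α.symm (HH.α.symm (HH.α.symm (HH.mul (HH.d1 (HH.d2 hh i) r) (HH.d1 (HH.d2 gg j) s))))))) :=
          Finset.sum_congr rfl fun j _ => Finset.sum_congr rfl fun i _ =>
            Finset.sum_congr rfl fun q _ => Finset.sum_congr rfl fun r _ => Finset.sum_comm
      _ = ∑ j ∈ HH.T gg, ∑ i ∈ HH.T hh, ∑ q ∈ HH.T (HH.d1 gg j), ∑ p ∈ HH.T (HH.d1 hh i), ∑ r ∈ HH.T (HH.d2 hh i), ∑ s ∈ HH.T (HH.d2 gg j), (BB.mul (BB.mul (γ (HH.α.symm (HH.α.symm (HH.α.symm (HH.d1 (HH.d1 hh i) p))))) (γ (HH.α.symm (HH.α.symm (HH.α.symm (HH.d1 (HH.d1 gg j) q)))))) (γ' (HH.α.symm (HH.α.symm (HH.α.symm (HH.mul (HH.d2 (HH.d2 hh i) r) (HH.d2 (HH.d2 gg j) s))))))) ⊗ₜ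[k]
            (HH.mul (HH.mul (HH.α.symm (HH.α.symm (HH.α.symm (HH.d2 (HH.d1 hh i) p)))) (HH.α.symm (HH.α.symm (HH.α.symm (HH.d2 (HH.d1 gg j) q))))) (HH.S (HH.α.symm (HH.α.symm (HH.α.symm (HH.mul (HH.d1 (HH.d2 hh i) r) (HH.d1 (HH.d2 gg j) s))))))) :=
          Finset.sum_congr rfl fun j _ => Finset.sum_congr rfl fun i _ =>
            Finset.sum_congr rfl fun q _ => Finset.sum_comm
      _ = ∑ j ∈ HH.T gg, ∑ q ∈ HH.T (HH.d1 gg j), ∑ i ∈ HH.T hh, ∑ p ∈ HH.T (HH.d1 hh i), ∑ r ∈ HH.T (HH.d2 hh i), ∑ s ∈ HH.T (HH.d2 gg j), (BB.mul (BB.mul (γ (HH.α.symm (HH.α.symm (HH.α.symm (HH.d1 (HH.d1 hh i) p))))) (γ (HH.α.symm (HH.α.symm (HH.α.symm (HH.d1 (HH.d1 gg j) q)))))) (γ' (HH.α.symm (HH.α.symm (HH.α.symm (HH.mul (HH.d2 (HH.d2 hh i) r) (HH.d2 (HH.d2 gg j) s))))))) ⊗ₜ[k]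
            (HH.mul (HH.mul (HH.α.symm (HH.α.symm (HH.α.symm (HH.d2 (HH.d1 hh i) p)))) (HH.α.symm (HH.α.symm (HH.α.symm (HH.d2 (HH.d1 gg j) q))))) (HH.S (HH.α.symm (HH.α.symm (HH.α.symm (HH.mul (HH.d1 (HH.d2 hh i) r) (HH.d1 (HH.d2 gg j) s))))))) :=
          Finset.sum_congr rfl fun j _ => Finset.sum_comm
      _ = ∑ j ∈ HH.T gg, ∑ q ∈ HH.T (HH.d1 gg j), ∑ i ∈ HH.T hh, ∑ kk ∈ HH.T (HH.d2 hh i), ∑ jp ∈ HH.T (HH.d1 (HH.d2 hh i) kk), ∑ s ∈ HH.T (HH.d2 gg j), (BB.mul (BB.mul (γ (HH.α.symm (HH.α.symm (HH.d1 hh i)))) (γ (HH.α.symm (HH.α.symm (HH.α.symm (HH.d1 (HH.d1 gg j) q)))))) (γ' (HH.α.symm (HH.α.symm (HH.α.symm (HH.mul (HH.d2 (HH.d2 hh i) kk) (HH.d2 (HH.d2 gg j) s))))))) ⊗ₜ[k]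
            (HH.mul (HH.mul (HH.α.symm (HH.α.symm (HH.α.symm (HH.α.symm (HH.d1 (HH.d1 (HH.d2 hh i) kk) jp))))) (HH.α.symm (HH.α.symm (HH.α.symm (HH.d2 (HH.d1 gg j) q))))) (HH.S (HH.α.symm (HH.α.symm (HH.α.symm (HH.mul (HH.α.symm (HH.d2 (HH.d1 (HH.d2 hh i) kk) jp)) (HH.d1 (HH.d2 gg j) s))))))) := by
          refine Finset.sum_congr rfl fun j _ => Finset.sum_congr rfl fun q _ => ?_
          have hre := rearrange HH (∑ s ∈ HH.T (HH.d2 gg j), phi4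
            ((BB.mul.comp ((BB.mul.flip (γ (A3 (HH.d1 (HH.d1 gg j) q)))).comp (γ.comp A3))).compl₂
              (γ'.comp (A3.comp (HH.mul.flip (HH.d2 (HH.d2 gg j) s)))))
            ((HH.mul.comp ((HH.mul.flip (A3 (HH.d2 (HH.d1 gg j) q))).comp A3)).compl₂
              (HH.S.comp (A3.comp (HH.mul.flip (HH.d1 (HH.d2 gg j) s)))))) hh
          simp only [LinearMap.sum_apply, phi4_apply, LinearMap.compl₂_apply,
            LinearMap.comp_apply, LinearMap.flip_apply, hA3, LinearEquiv.coe_coe,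
            LinearEquiv.symm_apply_apply] at hre
          exact hre
      _ = ∑ i ∈ HH.T hh, ∑ kk ∈ HH.T (HH.d2 hh i), ∑ jp ∈ HH.T (HH.d1 (HH.d2 hh i) kk), ∑ j ∈ HH.T gg, ∑ q ∈ HH.T (HH.d1 gg j), ∑ s ∈ HH.T (HH.d2 gg j), (BB.mul (BB.mul (γ (HH.α.symm (HH.α.symm (HH.d1 hh i)))) (γ (HH.α.symm (HH.α.symm (HH.α.symm (HH.d1 (HH.d1 gg j) q)))))) (γ' (HH.α.symm (HH.α.symm (HH.α.symm (HH.mul (HH.d2 (HH.d2 hh i) kk) (HH.d2 (HH.d2 gg j) s))))))) ⊗ₜ[k]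
            (HH.mul (HH.mul (HH.α.symm (HH.α.symm (HH.α.symm (HH.α.symm (HH.d1 (HH.d1 (HH.d2 hh i) kk) jp))))) (HH.α.symm (HH.α.symm (HH.α.symm (HH.d2 (HH.d1 gg j) q))))) (HH.S (HH.α.symm (HH.α.symm (HH.α.symm (HH.mul (HH.α.symm (HH.d2 (HH.d1 (HH.d2 hh i) kk) jp)) (HH.d1 (HH.d2 gg j) s))))))) := by
          calc ∑ j ∈ HH.T gg, ∑ q ∈ HH.T (HH.d1 gg j), ∑ i ∈ HH.T hh, ∑ kk ∈ HH.T (HH.d2 hh i), ∑ jp ∈ HH.T (HH.d1 (HH.d2 hh i) kk), ∑ s ∈ HH.T (HH.d2 gg j), (BB.mul (BB.mul (γ (HH.α.symm (HH.α.symm (HH.d1 hh i)))) (γ (HH.α.symm (HH.α.symm (HH.α.symm (HH.d1 (HH.d1 gg j) q)))))) (γ' (HH.α.symm (HH.α.symm (HH.α.symm (HH.mul (HH.d2 (HH.d2 hh i) kk) (HH.d2 (HH.d2 gg j) s))))))) ⊗ₜ[k]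
            (HH.mul (HH.mul (HH.α.symm (HH.α.symm (HH.α.symm (HH.α.symm (HH.d1 (HH.d1 (HH.d2 hh i) kk) jp))))) (HH.α.symm (HH.α.symm (HH.α.symm (HH.d2 (HH.d1 gg j) q))))) (HH.S (HH.α.symm (HH.α.symm (HH.α.symm (HH.mul (HH.α.symm (HH.d2 (HH.d1 (HH.d2 hh i) kk) jp)) (HH.d1 (HH.d2 gg j) s)))))))
              = ∑ j ∈ HH.T gg, ∑ i ∈ HH.T hh, ∑ q ∈ HH.T (HH.d1 gg j), ∑ kk ∈ HH.T (HH.d2 hh i), ∑ jp ∈ HH.T (HH.d1 (HH.d2 hh i) kk), ∑ s ∈ HH.T (HH.d2 gg j), (BB.mul (BB.mul (γ (HH.α.symm (HH.α.symm (HH.d1 hh i)))) (γ (HH.α.symm (HH.α.symm (HH.α.symm (HH.d1 (HH.d1 gg j) q)))))) (γ' (HH.α.symm (HH.α.symm (HH.α.symm (HH.mul (HH.d2 (HH.d2 hh i) kk) (HH.d2 (HH.d2 gg j) s))))))) ⊗ₜ[k]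
            (HH.mul (HH.mul (HH.α.symm (HH.α.symm (HH.α.symm (HH.α.symm (HH.d1 (HH.d1 (HH.d2 hh i) kk) jp))))) (HH.α.symm (HH.α.symm (HH.α.symm (HH.d2 (HH.d1 gg j) q))))) (HH.S (HH.α.symm (HH.α.symm (HH.α.symm (HH.mul (HH.α.symm (HH.d2 (HH.d1 (HH.d2 hh i) kk) jp)) (HH.d1 (HH.d2 gg j) s))))))) :=
                Finset.sum_congr rfl fun j _ => Finset.sum_comm
            _ = ∑ i ∈ HH.T hh, ∑ j ∈ HH.T gg, ∑ q ∈ HH.T (HH.d1 gg j), ∑ kk ∈ HH.T (HH.d2 hh i), ∑ jp ∈ HH.T (HH.d1 (HH.d2 hh i) kk), ∑ s ∈ HH.T (HH.d2 gg j), (BB.mul (BB.mul (γ (HH.α.symm (HH.α.symm (HH.d1 hh i)))) (γ (HH.α.symm (HH.α.symm (HH.α.symm (HH.d1 (HH.d1 gg j) q)))))) (γ' (HH.α.symm (HH.α.symm (HH.α.symm (HH.mul (HH.d2 (HH.d2 hh i) kk) (HH.d2 (HH.d2 gg j) s))))))) ⊗ₜ[k]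
            (HH.mul (HH.mul (HH.α.symm (HH.α.symm (HH.α.symm (HH.α.symm (HH.d1 (HH.d1 (HH.d2 hh i) kk) jp))))) (HH.α.symm (HH.α.symm (HH.α.symm (HH.d2 (HH.d1 gg j) q))))) (HH.S (HH.α.symm (HH.α.symm (HH.α.symm (HH.mul (HH.α.symm (HH.d2 (HH.d1 (HH.d2 hh i) kk) jp)) (HH.d1 (HH.d2 gg j) s))))))) := Finset.sum_comm
            _ = ∑ i ∈ HH.T hh, ∑ j ∈ HH.T gg, ∑ kk ∈ HH.T (HH.d2 hh i), ∑ q ∈ HH.T (HH.d1 gg j), ∑ jp ∈ HH.T (HH.d1 (HH.d2 hh i) kk), ∑ s ∈ HH.T (HH.d2 gg j), (BB.mul (BB.mul (γ (HH.α.symm (HH.α.symm (HH.d1 hh i)))) (γ (HH.α.symm (HH.α.symm (HH.α.symm (HH.d1 (HH.d1 gg j) q)))))) (γ' (HH.α.symm (HH.α.symm (HH.α.symm (HH.mul (HH.d2 (HH.d2 hh i) kk) (HH.d2 (HH.d2 gg j) s))))))) ⊗ₜ[k]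
            (HH.mul (HH.mul (HH.α.symm (HH.α.symm (HH.α.symm (HH.α.symm (HH.d1 (HH.d1 (HH.d2 hh i) kk) jp))))) (HH.α.symm (HH.α.symm (HH.α.symm (HH.d2 (HH.d1 gg j) q))))) (HH.S (HH.α.symm (HH.α.symm (HH.α.symm (HH.mul (HH.α.symm (HH.d2 (HH.d1 (HH.d2 hh i) kk) jp)) (HH.d1 (HH.d2 gg j) s))))))) :=
                Finset.sum_congr rfl fun i _ => Finset.sum_congr rfl fun j _ => Finset.sum_comm
            _ = ∑ i ∈ HH.T hh, ∑ kk ∈ HH.T (HH.d2 hh i), ∑ j ∈ HH.T gg, ∑ q ∈ HH.T (HH.d1 gg j), ∑ jp ∈ HH.T (HH.d1 (HH.d2 hh i) kk), ∑ s ∈ HH.T (HH.d2 gg j), (BB.mul (BB.mul (γ (HH.α.symm (HH.α.symm (HH.d1 hh i)))) (γ (HH.α.symm (HH.α.symm (HH.α.symm (HH.d1 (HH.d1 gg j) q)))))) (γ' (HH.α.symm (HH.α.symm (HH.α.symm (HH.mul (HH.d2 (HH.d2 hh i) kk) (HH.d2 (HH.d2 gg j) s))))))) ⊗ₜ[k]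
            (HH.mul (HH.mul (HH.α.symm (HH.α.symm (HH.α.symm (HH.α.symm (HH.d1 (HH.d1 (HH.d2 hh i) kk) jp))))) (HH.α.symm (HH.α.symm (HH.α.symm (HH.d2 (HH.d1 gg j) q))))) (HH.S (HH.α.symm (HH.α.symm (HH.α.symm (HH.mul (HH.α.symm (HH.d2 (HH.d1 (HH.d2 hh i) kk) jp)) (HH.d1 (HH.d2 gg j) s))))))) :=
                Finset.sum_congr rfl fun i _ => Finset.sum_comm
            _ = ∑ i ∈ HH.T hh, ∑ kk ∈ HH.T (HH.d2 hh i), ∑ j ∈ HH.T gg, ∑ jp ∈ HH.T (HH.d1 (HH.d2 hh i) kk), ∑ q ∈ HH.T (HH.d1 gg j), ∑ s ∈ HH.T (HH.d2 gg j), (BB.mul (BB.mul (γ (HH.α.symm (HH.α.symm (HH.d1 hh i)))) (γ (HH.α.symm (HH.α.symm (HH.α.symm (HH.d1 (HH.d1 gg j) q)))))) (γ' (HH.α.symm (HH.α.symm (HH.α.symm (HH.mul (HH.d2 (HH.d2 hh i) kk) (HH.d2 (HH.d2 gg j) s))))))) ⊗ₜ[k]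
            (HH.mul (HH.mul (HH.α.symm (HH.α.symm (HH.α.symm (HH.α.symm (HH.d1 (HH.d1 (HH.d2 hh i) kk) jp))))) (HH.α.symm (HH.α.symm (HH.α.symm (HH.d2 (HH.d1 gg j) q))))) (HH.S (HH.α.symm (HH.α.symm (HH.α.symm (HH.mul (HH.α.symm (HH.d2 (HH.d1 (HH.d2 hh i) kk) jp)) (HH.d1 (HH.d2 gg j) s))))))) :=
                Finset.sum_congr rfl fun i _ => Finset.sum_congr rfl fun kk _ =>
                  Finset.sum_congr rfl fun j _ => Finset.sum_comm
            _ = ∑ i ∈ HH.T hh, ∑ kk ∈ HH.T (HH.d2 hh i), ∑ jp ∈ HH.T (HH.d1 (HH.d2 hh i) kk), ∑ j ∈ HH.T gg, ∑ q ∈ HH.T (HH.d1 gg j), ∑ s ∈ HH.T (HH.d2 gg j), (BB.mul (BB.mul (γ (HH.α.symm (HH.α.symm (HH.d1 hh i)))) (γ (HH.α.symm (HH.α.symm (HH.α.symm (HH.d1 (HH.d1 gg j) q)))))) (γ' (HH.α.symm (HH.α.symm (HH.α.symm (HH.mul (HH.d2 (HH.d2 hh i) kk) (HH.d2 (HH.d2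 gg j) s))))))) ⊗ₜ[k]
            (HH.mul (HH.mul (HH.α.symm (HH.α.symm (HH.α.symm (HH.α.symm (HH.d1 (HH.d1 (HH.d2 hh i) kk) jp))))) (HH.α.symm (HH.α.symm (HH.α.symm (HH.d2 (HH.d1 gg j) q))))) (HH.S (HH.α.symm (HH.α.symm (HH.α.symm (HH.mul (HH.α.symm (HH.d2 (HH.d1 (HH.d2 hh i) kk) jp)) (HH.d1 (HH.d2 gg j) s))))))) :=
                Finset.sum_congr rfl fun i _ => Finset.sum_congr rfl fun kk _ => Finset.sum_comm
      _ = ∑ i ∈ HH.T hh, ∑ kk ∈ HH.T (HH.d2 hh i), ∑ jp ∈ HH.T (HH.d1 (HH.d2 hh i) kk), ∑ j ∈ HH.T gg, ∑ ll ∈ HH.T (HH.d2 gg j), ∑ qp ∈ HH.T (HH.d1 (HH.d2 gg j) ll), (BB.mul (BB.mul (γ (HH.α.symm (HH.α.symm (HH.d1 hh i)))) (γ (HH.α.symm (HH.α.symm (HH.d1 gg j))))) (γ' (HH.α.symm (HH.α.symm (HH.α.symm (HH.mul (HH.d2 (HH.d2 hh i) kk) (HH.d2 (HH.d2 gg j)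 ll))))))) ⊗ₜ[k]
            (HH.mul (HH.mul (HH.α.symm (HH.α.symm (HH.α.symm (HH.α.symm (HH.d1 (HH.d1 (HH.d2 hh i) kk) jp))))) (HH.α.symm (HH.α.symm (HH.α.symm (HH.α.symm (HH.d1 (HH.d1 (HH.d2 gg j) ll) qp)))))) (HH.S (HH.α.symm (HH.α.symm (HH.α.symm (HH.mul (HH.α.symm (HH.d2 (HH.d1 (HH.d2 hh i) kk) jp)) (HH.α.symm (HH.d2 (HH.d1 (HH.d2 gg j) ll) qp)))))))) := by
          refine Finset.sum_congr rfl fun i _ => Finset.sum_congr rfl fun kk _ =>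
            Finset.sum_congr rfl fun jp _ => ?_
          have hre := rearrange HH (phi4
            ((BB.mul.comp ((BB.mul (γ (HH.α.symm (HH.α.symm (HH.d1 hh i))))).comp (γ.comp A3))).compl₂
              (γ'.comp (A3.comp (HH.mul (HH.d2 (HH.d2 hh i) kk)))))
            ((HH.mul.comp ((HH.mul (HH.α.symm (HH.α.symm (HH.α.symm (HH.α.symm (HH.d1 (HH.d1 (HH.d2 hh i) kk) jp)))))).comp A3)).compl₂
              (HH.S.comp (A3.comp (HH.mul (HH.α.symm (HH.d2 (HH.d1 (HH.d2 hh i) kk) jp))))))) gg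
          simp only [phi4_apply, LinearMap.compl₂_apply,
            LinearMap.comp_apply, hA3, LinearEquiv.coe_coe,
            LinearEquiv.symm_apply_apply] at hre
          exact hre
      _ = ∑ i ∈ HH.T hh, ∑ kk ∈ HH.T (HH.d2 hh i), ∑ j ∈ HH.T gg, ∑ ll ∈ HH.T (HH.d2 gg j), ∑ jp ∈ HH.T (HH.d1 (HH.d2 hh i) kk), ∑ qp ∈ HH.T (HH.d1 (HH.d2 gg j) ll), (BB.mul (BB.mul (γ (HH.α.symm (HH.α.symm (HH.d1 hh i)))) (γ (HH.α.symm (HH.α.symm (HH.d1 gg j))))) (γ' (HH.α.symm (HH.α.symm (HH.α.symm (HH.mul (HH.d2 (HH.d2 hh i) kk) (HH.d2 (HH.d2 gg j) ll))))))) ⊗ₜ[k]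
            (HH.mul (HH.mul (HH.α.symm (HH.α.symm (HH.α.symm (HH.α.symm (HH.d1 (HH.d1 (HH.d2 hh i) kk) jp))))) (HH.α.symm (HH.α.symm (HH.α.symm (HH.α.symm (HH.d1 (HH.d1 (HH.d2 gg j) ll) qp)))))) (HH.S (HH.α.symm (HH.α.symm (HH.α.symm (HH.mul (HH.α.symm (HH.d2 (HH.d1 (HH.d2 hh i) kk) jp)) (HH.α.symm (HH.d2 (HH.d1 (HH.d2 gg j) ll) qp)))))))) := by
          refine Finset.sum_congr rfl fun i _ => Finset.sum_congr rfl fun kk _ => ?_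
          calc ∑ jp ∈ HH.T (HH.d1 (HH.d2 hh i) kk), ∑ j ∈ HH.T gg, ∑ ll ∈ HH.T (HH.d2 gg j), ∑ qp ∈ HH.T (HH.d1 (HH.d2 gg j) ll), (BB.mul (BB.mul (γ (HH.α.symm (HH.α.symm (HH.d1 hh i)))) (γ (HH.α.symm (HH.α.symm (HH.d1 gg j))))) (γ' (HH.α.symm (HH.α.symm (HH.α.symm (HH.mul (HH.d2 (HH.d2 hh i) kk) (HH.d2 (HH.d2 gg j) ll))))))) ⊗ₜ[k]
            (HH.mul (HH.mul (HH.α.symm (HH.α.symm (HH.α.symm (HH.α.symm (HH.d1 (HH.d1 (HH.d2 hh i) kk) jp))))) (HH.α.symm (HH.α.symm (HH.α.symm (HH.α.symm (HH.d1 (HH.d1 (HH.d2 gg j) ll) qp)))))) (HH.S (HH.α.symm (HH.α.symm (HH.α.symm (HH.mul (HH.α.symm (HH.d2 (HH.d1 (HH.d2 hh i) kk) jp)) (HH.α.symm (HH.d2 (HH.d1 (HH.d2 gg j) ll) qp))))))))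
              = ∑ j ∈ HH.T gg, ∑ jp ∈ HH.T (HH.d1 (HH.d2 hh i) kk), ∑ ll ∈ HH.T (HH.d2 gg j), ∑ qp ∈ HH.T (HH.d1 (HH.d2 gg j) ll), (BB.mul (BB.mul (γ (HH.α.symm (HH.α.symm (HH.d1 hh i)))) (γ (HH.α.symm (HH.α.symm (HH.d1 gg j))))) (γ' (HH.α.symm (HH.α.symm (HH.α.symm (HH.mul (HH.d2 (HH.d2 hh i) kk) (HH.d2 (HH.d2 gg j) ll))))))) ⊗ₜ[k]
            (HH.mul (HH.mul (HH.α.symm (HH.α.symm (HH.α.symm (HH.α.symm (HH.d1 (HH.d1 (HH.d2 hh i) kk) jp))))) (HH.α.symm (HH.α.symm (HH.α.symm (HH.α.symm (HH.d1 (HH.d1 (HH.d2 gg j) ll) qp)))))) (HH.S (HH.α.symm (HH.α.symm (HH.α.symm (HH.mul (HH.α.symm (HH.d2 (HH.d1 (HH.d2 hh i) kk) jp)) (HH.α.symm (HH.d2 (HH.d1 (HH.d2 gg j) ll) qp)))))))) := Finset.sum_comm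
            _ = ∑ j ∈ HH.T gg, ∑ ll ∈ HH.T (HH.d2 gg j), ∑ jp ∈ HH.T (HH.d1 (HH.d2 hh i) kk), ∑ qp ∈ HH.T (HH.d1 (HH.d2 gg j) ll), (BB.mul (BB.mul (γ (HH.α.symm (HH.α.symm (HH.d1 hh i)))) (γ (HH.α.symm (HH.α.symm (HH.d1 gg j))))) (γ' (HH.α.symm (HH.α.symm (HH.α.symm (HH.mul (HH.d2 (HH.d2 hh i) kk) (HH.d2 (HH.d2 gg j) ll))))))) ⊗ₜ[k]
            (HH.mul (HH.mul (HH.α.symm (HH.α.symm (HH.α.symm (HH.α.symm (HH.d1 (HH.d1 (HH.d2 hh i) kk) jp))))) (HH.α.symm (HH.α.symm (HH.α.symm (HH.α.symm (HH.d1 (HH.d1 (HH.d2 gg j) ll) qp)))))) (HH.S (HH.α.symm (HH.α.symm (HH.α.symm (HH.mul (HH.α.symm (HH.d2 (HH.d1 (HH.d2 hh i) kk) jp)) (HH.α.symm (HH.d2 (HH.d1 (HH.d2 gg j) ll) qp)))))))) :=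
                Finset.sum_congr rfl fun j _ => Finset.sum_comm
      _ = ∑ i ∈ HH.T hh, ∑ kk ∈ HH.T (HH.d2 hh i), ∑ j ∈ HH.T gg, ∑ ll ∈ HH.T (HH.d2 gg j), (HH.counit (HH.d1 (HH.d2 hh i) kk) * HH.counit (HH.d1 (HH.d2 gg j) ll)) •
            ((BB.mul (BB.mul (γ (HH.α.symm (HH.α.symm (HH.d1 hh i)))) (γ (HH.α.symm (HH.α.symm (HH.d1 gg j))))) (γ' (HH.α.symm (HH.α.symm (HH.α.symm (HH.mul (HH.d2 (HH.d2 hh i) kk) (HH.d2 (HH.d2 gg j) ll))))))) ⊗ₜ[k] HH.one) := by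
          refine Finset.sum_congr rfl fun i _ => Finset.sum_congr rfl fun kk _ =>
            Finset.sum_congr rfl fun j _ => Finset.sum_congr rfl fun ll _ => ?_
          simp only [← TensorProduct.tmul_sum]
          have hsum : (∑ jp ∈ HH.T (HH.d1 (HH.d2 hh i) kk), ∑ qp ∈ HH.T (HH.d1 (HH.d2 gg j) ll), (HH.mul (HH.mul (HH.α.symm (HH.α.symm (HH.α.symm (HH.α.symm (HH.d1 (HH.d1 (HH.d2 hh i) kk) jp))))) (HH.α.symm (HH.α.symm (HH.α.symm (HH.α.symm (HH.d1 (HH.d1 (HH.d2 gg j) ll) qp)))))) (HH.S (HH.α.symm (HH.α.symm (HH.α.symm (HH.mul (HH.α.symm (HH.d2 (HH.d1 (HH.d2 hh i) kk) jp)) (HH.α.symm (HH.d2 (HH.d1 (HH.d2 gg j) ll) qp)))))))))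
              = (HH.counit (HH.d1 (HH.d2 hh i) kk) * HH.counit (HH.d1 (HH.d2 gg j) ll)) •
                  HH.one := by
            have e0 : (∑ jp ∈ HH.T (HH.d1 (HH.d2 hh i) kk), ∑ qp ∈ HH.T (HH.d1 (HH.d2 gg j) ll), (HH.mul (HH.mul (HH.α.symm (HH.α.symm (HH.α.symm (HH.α.symm (HH.d1 (HH.d1 (HH.d2 hh i) kk) jp))))) (HH.α.symm (HH.α.symm (HH.α.symm (HH.α.symm (HH.d1 (HH.d1 (HH.d2 gg j) ll) qp)))))) (HH.S (HH.α.symm (HH.α.symm (HH.α.symm (HH.mul (HH.α.symm (HH.d2 (HH.d1 (HH.d2 hh i) kk) jp)) (HH.α.symm (HH.d2 (HH.d1 (HH.d2 gg j) ll) qp)))))))))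
                = ∑ jp ∈ HH.T (HH.d1 (HH.d2 hh i) kk), ∑ qp ∈ HH.T (HH.d1 (HH.d2 gg j) ll),
                    (HH.α.symm (HH.α.symm (HH.α.symm (HH.α.symm (HH.mul (HH.mul (HH.d1 (HH.d1 (HH.d2 hh i) kk) jp) (HH.d1 (HH.d1 (HH.d2 gg j) ll) qp)) (HH.S (HH.mul (HH.d2 (HH.d1 (HH.d2 hh i) kk) jp) (HH.d2 (HH.d1 (HH.d2 gg j) ll) qp)))))))) :=
              Finset.sum_congr rfl fun jp _ => Finset.sum_congr rfl fun qp _ => by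
                simp only [S_alpha_symm, ← alpha_symm_mul]
            rw [e0]
            simp only [← map_sum]
            have e2 := comul_mul_sum HH (HH.mul.compl₂ HH.S)
              (HH.d1 (HH.d2 hh i) kk) (HH.d1 (HH.d2 gg j) ll)
            simp only [LinearMap.compl₂_apply] at e2
            rw [← e2, HH.S_right, HH.counit_mul]
            simp only [map_smul, alpha_symm_one]
          rw [hsum, TensorProduct.tmul_smul]
      _ = ∑ i ∈ HH.T hh, ∑ kk ∈ HH.T (HH.d2 hh i), ∑ j ∈ HH.T gg, HH.counit (HH.d1 (HH.d2 hh i) kk) • ((BB.mul (BB.mul (γ (HH.α.symm (HH.α.symm (HH.d1 hh i)))) (γ (HH.α.symm (HH.α.symm (HH.d1 gg j))))) (γ' (HH.α.symm (HH.α.symm (HH.α.symm (HH.mul (HH.d2 (HH.d2 hh i) kk) (HH.α (HH.d2 gg j)))))))) ⊗ₜ[k] HH.one) := by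
          refine Finset.sum_congr rfl fun i _ => Finset.sum_congr rfl fun kk _ =>
            Finset.sum_congr rfl fun j _ => ?_
          simp only [mul_smul]
          rw [← Finset.smul_sum]
          congr 1
          set G : H →ₗ[k] B ⊗[k] H := ((TensorProduct.mk k B H).flip HH.one).comp
            ((BB.mul (BB.mul (γ (HH.α.symm (HH.α.symm (HH.d1 hh i)))) (γ (HH.α.symm (HH.α.symm (HH.d1 gg j)))))).comp
              (γ'.comp (A3.comp (HH.mul (HH.d2 (HH.d2 hh i) kk))))) with hG
          have hGapp : ∀ z, G z = (BB.mul (BB.mul (γ (HH.α.symm (HH.α.symm (HH.d1 hh i))))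
              (γ (HH.α.symm (HH.α.symm (HH.d1 gg j))))) (γ' (HH.α.symm (HH.α.symm (HH.α.symm (HH.mul (HH.d2 (HH.d2 hh i) kk) (z))))))) ⊗ₜ[k] HH.one := by
            intro z; simp [hG, hA3]
          have hc := congrArg G (HH.counit_left (HH.d2 gg j))
          rw [map_sum] at hc
          simp only [map_smul, LinearMap.smul_apply, TensorProduct.smul_tmul', hGapp] at hc
          exact hc
      _ = ∑ i ∈ HH.T hh, ∑ j ∈ HH.T gg, ∑ kk ∈ HH.T (HH.d2 hh i), HH.counit (HH.d1 (HH.d2 hh i) kk) • ((BB.mul (BB.mul (γ (HH.α.symm (HH.α.symm (HH.d1 hh i)))) (γ (HH.α.symm (HH.α.symm (HH.d1 gg j))))) (γ' (HH.α.symm (HH.α.symm (HH.α.symm (HH.mul (HH.d2 (HH.d2 hh i) kk) (HH.α (HH.d2 gg j)))))))) ⊗ₜ[k] HH.one) :=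
          Finset.sum_congr rfl fun i _ => Finset.sum_comm
      _ = ∑ i ∈ HH.T hh, ∑ j ∈ HH.T gg, (BB.mul (BB.mul (γ (HH.α.symm (HH.α.symm (HH.d1 hh i)))) (γ (HH.α.symm (HH.α.symm (HH.d1 gg j))))) (γ' (HH.α.symm (HH.α.symm (HH.α.symm (HH.mul (HH.α (HH.d2 hh i)) (HH.α (HH.d2 gg j)))))))) ⊗ₜ[k] HH.one := by
          refine Finset.sum_congr rfl fun i _ => Finset.sum_congr rfl fun j _ => ?_
          set G : H →ₗ[k] B ⊗[k] H := ((TensorProduct.mk k B H).flip HH.one).comp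
            ((BB.mul (BB.mul (γ (HH.α.symm (HH.α.symm (HH.d1 hh i)))) (γ (HH.α.symm (HH.α.symm (HH.d1 gg j)))))).comp
              (γ'.comp (A3.comp (HH.mul.flip (HH.α (HH.d2 gg j)))))) with hG
          have hGapp : ∀ z, G z = (BB.mul (BB.mul (γ (HH.α.symm (HH.α.symm (HH.d1 hh i))))
              (γ (HH.α.symm (HH.α.symm (HH.d1 gg j)))))
                (γ' (HH.α.symm (HH.α.symm (HH.α.symm (HH.mul (z) (HH.α (HH.d2 gg j)))))))) ⊗ₜ[k] HH.one := by
            intro z; simp [hG, hA3]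
          have hc := congrArg G (HH.counit_left (HH.d2 hh i))
          rw [map_sum] at hc
          simp only [map_smul, LinearMap.smul_apply, TensorProduct.smul_tmul', hGapp] at hc
          exact hc
      _ = BB.β (cleftSigma HH BB γ γ' hh gg) ⊗ₜ[k] HH.one := by
          simp only [cleftSigma, map_sum, TensorProduct.sum_tmul]
          refine Finset.sum_congr rfl fun i _ => Finset.sum_congr rfl fun j _ => ?_
          congr 1
          rw [BB.β_mul, BB.β_mul, ← hβγ, ← hβγ, hβγ', ← HH.α_mul]
          simp
end S6
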